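/- If a connected finite simple bipartite graph is (k, ℓ)-biregular on bipartition (P, Q) with k ≥ 2 and ℓ ≥ 2, k ≤ |Q|/2 and ℓ ≤ |P|/2, then there exists a disconnected (k, ℓ)-biregular graph on the same bipartition (P, Q); hence the two graphs are non-isomorphic but have the same degree data. -/

import Mathlib

open Finset

/-- Auxiliary: counting residues in an interval. -/
private lemma countT {q ℓ j : ℕ} (hq : 0 < q) (hj : j < q) :
    ((range (q * ℓ)).filter (fun t => t % q = j)).card = ℓ := by
  have h : (range ℓ).card = ((range (q * ℓ)).filter (fun t => t % q = j)).card := by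
    apply Finset.card_bij (fun s _ => j + s * q)
    · intro s hs
      simp only [mem_filter, mem_range] at *
      have h1 : (s + 1) * q ≤ ℓ * q := Nat.mul_le_mul_right q hs
      refine ⟨by nlinarith, ?_⟩
      simp [Nat.add_mul_mod_self_right, Nat.mod_eq_of_lt hj]
    · intro s _ s' _ h
      have : s * q = s' * q := by omega
      exact Nat.eq_of_mul_eq_mul_right hq this
    · intro t ht
      simp only [mem_filter, mem_range] at ht
      refine ⟨t / q, mem_range.mpr ?_, ?_⟩
      · exact (Nat.div_lt_iff_lt_mul hq).mpr (by rw [mul_comm]; exact ht.1)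
      · rw [← ht.2, Nat.mul_comm]; exact Nat.mod_add_div t q
  rw [← h, card_range]

private lemma count1 {q k i : ℕ} (hq : 0 < q) (hkq : k ≤ q) :
    ((range q).filter (fun j => ∃ r < k, (i * k + r) % q = j)).card = k := by
  have himg : (range q).filter (fun j => ∃ r < k, (i * k + r) % q = j)
      = (range k).image (fun r => (i * k + r) % q) := by
    ext j
    simp only [mem_filter, mem_range, mem_image]
    constructor
    · rintro ⟨-, r, hr, hrj⟩; exact ⟨r, hr, hrj⟩
    · rintro ⟨r, hr, hrj⟩
      exact ⟨hrj ▸ Nat.mod_lt _ hq, r, hr, hrj⟩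
  rw [himg, Finset.card_image_of_injOn, card_range]
  intro r hr r' hr' h
  simp only [coe_range, Set.mem_Iio] at hr hr'
  have h1 : (i * k + r) % q = (i * k + r') % q := h
  have h2 : r ≡ r' [MOD q] := Nat.ModEq.add_left_cancel' (i * k) h1
  exact Nat.ModEq.eq_of_lt_of_lt h2 (lt_of_lt_of_le hr hkq) (lt_of_lt_of_le hr' hkq)

private lemma count2 {p q k ℓ j : ℕ} (hk : 0 < k) (hkq : k ≤ q) (hpq : p * k = q * ℓ)
    (hj : j < q) :
    ((range p).filter (fun i => ∃ r < k, (i * k + r) % q = j)).card = ℓ := by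
  have hq : 0 < q := lt_of_lt_of_le hk hkq
  have key : ((range (p * k)).filter (fun t => t % q = j)).card
      = ((range p).filter (fun i => ∃ r < k, (i * k + r) % q = j)).card := by
    apply Finset.card_bij (fun t _ => t / k)
    · intro t ht
      simp only [mem_filter, mem_range] at *
      refine ⟨(Nat.div_lt_iff_lt_mul hk).mpr ht.1, t % k, Nat.mod_lt _ hk, ?_⟩
      have h3 : t / k * k + t % k = t := by rw [mul_comm]; exact Nat.div_add_mod t k
      rw [h3]; exact ht.2
    · intro t ht t' ht' h
      simp only [mem_filter, mem_range] at ht ht'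
      have h2 : t ≡ t' [MOD q] := ht.2.trans ht'.2.symm
      have e1 : k * (t / k) + t % k = t := Nat.div_add_mod t k
      have e2 : k * (t / k) + t' % k = t' := by rw [h]; exact Nat.div_add_mod t' k
      have m1 : t % k < k := Nat.mod_lt _ hk
      have m2 : t' % k < k := Nat.mod_lt _ hk
      rcases le_total t t' with hle | hle
      · have hd : t' - t < k := by omega
        have h4 : t' - t ≡ 0 [MOD q] :=
          (Nat.modEq_zero_iff_dvd).mpr ((Nat.modEq_iff_dvd' hle).mp h2)
        have := Nat.ModEq.eq_of_lt_of_lt h4 (lt_of_lt_of_le hd hkq) hq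
        omega
      · have hd : t - t' < k := by omega
        have h4 : t - t' ≡ 0 [MOD q] :=
          (Nat.modEq_zero_iff_dvd).mpr ((Nat.modEq_iff_dvd' hle).mp h2.symm)
        have := Nat.ModEq.eq_of_lt_of_lt h4 (lt_of_lt_of_le hd hkq) hq
        omega
    · intro i hi
      simp only [mem_filter, mem_range] at hi
      obtain ⟨hip, r, hrk, hrj⟩ := hi
      refine ⟨i * k + r, mem_filter.mpr ⟨mem_range.mpr ?_, hrj⟩, ?_⟩
      · have h5 : (i + 1) * k ≤ p * k := Nat.mul_le_mul_right k hip
        have h6 : (i + 1) * k = i * k + k := by ring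
        omega
      · rw [Nat.add_comm, Nat.add_mul_div_right _ _ hk, Nat.div_eq_of_lt hrk, Nat.zero_add]
  rw [← key, hpq, countT hq hj]

noncomputable def idxIn {V : Type*} [DecidableEq V] (s : Finset V) (w : V) : ℕ :=
  if h : w ∈ s then ((s.equivFin ⟨w, h⟩ : Fin s.card) : ℕ) else 0

lemma idxIn_lt {V : Type*} [DecidableEq V] {s : Finset V} {w : V} (h : w ∈ s) :
    idxIn s w < s.card := by
  rw [idxIn, dif_pos h]; exact (s.equivFin ⟨w, h⟩).isLt

lemma idxIn_inj {V : Type*} [DecidableEq V] {s : Finset V} {w w' : V} (h : w ∈ s)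
    (h' : w' ∈ s) (he : idxIn s w = idxIn s w') : w = w' := by
  rw [idxIn, idxIn, dif_pos h, dif_pos h'] at he
  have := s.equivFin.injective (Fin.val_injective he)
  exact Subtype.ext_iff.mp this

lemma idxIn_surj {V : Type*} [DecidableEq V] {s : Finset V} {j : ℕ} (hj : j < s.card) :
    ∃ w ∈ s, idxIn s w = j := by
  refine ⟨(s.equivFin.symm ⟨j, hj⟩ : {x // x ∈ s}), (s.equivFin.symm ⟨j, hj⟩).2, ?_⟩
  rw [idxIn, dif_pos]
  · conv_lhs => rw [show (⟨(s.equivFin.symm ⟨j, hj⟩ : {x // x ∈ s}),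
      (s.equivFin.symm ⟨j, hj⟩).2⟩ : {x // x ∈ s}) = s.equivFin.symm ⟨j, hj⟩ from Subtype.ext rfl]
    rw [Equiv.apply_symm_apply]
  · exact (s.equivFin.symm ⟨j, hj⟩).2

lemma card_filter_idx {V : Type*} [DecidableEq V] (s : Finset V) (pr : ℕ → Prop)
    [DecidablePred pr] :
    (s.filter fun w => pr (idxIn s w)).card = ((range s.card).filter pr).card := by
  apply Finset.card_bij (fun w _ => idxIn s w)
  · intro w hw
    simp only [mem_filter, mem_range] at *
    exact ⟨idxIn_lt hw.1, hw.2⟩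
  · intro w hw w' hw' h
    exact idxIn_inj (mem_filter.mp hw).1 (mem_filter.mp hw').1 h
  · intro j hj
    simp only [mem_filter, mem_range] at hj
    obtain ⟨w, hws, hwj⟩ := idxIn_surj hj.1
    exact ⟨w, mem_filter.mpr ⟨hws, hwj ▸ hj.2⟩, hwj⟩

/-- The relation defining the disconnected biregular graph. -/
def biRel {V : Type*} [DecidableEq V] (A B P' Q' : Finset V) (k : ℕ) (v w : V) : Prop :=
  (v ∈ A ∧ w ∈ B) ∨
    (v ∈ P' ∧ w ∈ Q' ∧ ∃ r < k, (idxIn P' v * k + r) % Q'.card = idxIn Q' w)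

lemma aux_main {V : Type*} [DecidableEq V] (P Q A B : Finset V) (k ℓ : ℕ)
    (hdisj : Disjoint P Q) (hAP : A ⊆ P) (hBQ : B ⊆ Q)
    (hAcard : A.card = ℓ) (hBcard : B.card = k)
    (hk : 0 < k) (hkq : k ≤ (Q \ B).card)
    (hpq : (P \ A).card * k = (Q \ B).card * ℓ) :
    ∃ G' : SimpleGraph V,
      (∀ v ∈ P, ∀ w ∈ P, ¬ G'.Adj v w) ∧
      (∀ v ∈ Q, ∀ w ∈ Q, ¬ G'.Adj v w) ∧
      (∀ v ∈ P, ∀ [DecidablePred (G'.Adj v ·)],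
          (Q.filter (fun w => G'.Adj v w)).card = k) ∧
      (∀ v ∈ Q, ∀ [DecidablePred (G'.Adj v ·)],
          (P.filter (fun w => G'.Adj v w)).card = ℓ) ∧
      ¬ G'.Connected := by
  classical
  have hq : 0 < (Q \ B).card := lt_of_lt_of_le hk hkq
  have hPQ : ∀ {x : V}, x ∈ P → x ∉ Q := fun hx hx' => Finset.disjoint_left.mp hdisj hx hx'
  refine ⟨SimpleGraph.fromRel (biRel A B (P \ A) (Q \ B) k), ?_, ?_, ?_, ?_, ?_⟩
  · -- P independent
    intro v hv w hw hadj
    rw [SimpleGraph.fromRel_adj] at hadj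
    rcases hadj.2 with (⟨-, h2⟩ | ⟨-, h2, -⟩) | (⟨-, h2⟩ | ⟨-, h2, -⟩) <;>
      first
        | exact hPQ hw (hBQ h2)
        | exact hPQ hw (mem_sdiff.mp h2).1
        | exact hPQ hv (hBQ h2)
        | exact hPQ hv (mem_sdiff.mp h2).1
  · -- Q independent
    intro v hv w hw hadj
    rw [SimpleGraph.fromRel_adj] at hadj
    rcases hadj.2 with (⟨h1, -⟩ | ⟨h1, -, -⟩) | (⟨h1, -⟩ | ⟨h1, -, -⟩) <;>
      first
        | exact hPQ (hAP h1) hv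
        | exact hPQ (mem_sdiff.mp h1).1 hv
        | exact hPQ (hAP h1) hw
        | exact hPQ (mem_sdiff.mp h1).1 hw
  · -- degrees on P side
    intro v hv _
    by_cases hvA : v ∈ A
    · have hfB : Q.filter (fun w => (SimpleGraph.fromRel (biRel A B (P \ A) (Q \ B) k)).Adj v w) = B := by
        ext w
        simp only [mem_filter]
        constructor
        · rintro ⟨hwQ, hadj⟩
          rw [SimpleGraph.fromRel_adj] at hadj
          rcases hadj.2 with (⟨-, h2⟩ | ⟨h1, -, -⟩) | (⟨h1, -⟩ | ⟨h1, -, -⟩)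
          · exact h2
          · exact absurd hvA (mem_sdiff.mp h1).2
          · exact absurd (hAP h1) (fun hx => hPQ hx hwQ)
          · exact absurd (mem_sdiff.mp h1).1 (fun hx => hPQ hx hwQ)
        · intro hwB
          refine ⟨hBQ hwB, ?_⟩
          rw [SimpleGraph.fromRel_adj]
          exact ⟨fun h => hPQ (hAP hvA) (h ▸ hBQ hwB), Or.inl (Or.inl ⟨hvA, hwB⟩)⟩
      rw [Finset.filter_congr (fun w _ => Iff.rfl)] at *
      rw [hfB, hBcard]
    · have hvP' : v ∈ P \ A := mem_sdiff.mpr ⟨hv, hvA⟩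
      have hf : Q.filter (fun w => (SimpleGraph.fromRel (biRel A B (P \ A) (Q \ B) k)).Adj v w)
          = (Q \ B).filter (fun w =>
              (fun j => ∃ r < k, (idxIn (P \ A) v * k + r) % (Q \ B).card = j)
                (idxIn (Q \ B) w)) := by
        ext w
        simp only [mem_filter]
        constructor
        · rintro ⟨hwQ, hadj⟩
          rw [SimpleGraph.fromRel_adj] at hadj
          rcases hadj.2 with (⟨h1, -⟩ | ⟨-, h2, h3⟩) | (⟨h1, -⟩ | ⟨h1, -, -⟩)
          · exact absurd h1 hvA
          · exact ⟨h2, h3⟩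
          · exact absurd (hAP h1) (fun hx => hPQ hx hwQ)
          · exact absurd (mem_sdiff.mp h1).1 (fun hx => hPQ hx hwQ)
        · rintro ⟨hwQ', hcond⟩
          refine ⟨(mem_sdiff.mp hwQ').1, ?_⟩
          rw [SimpleGraph.fromRel_adj]
          exact ⟨fun h => hPQ hv (h ▸ (mem_sdiff.mp hwQ').1),
            Or.inl (Or.inr ⟨hvP', hwQ', hcond⟩)⟩
      rw [hf]
      exact (card_filter_idx (Q \ B)
        (fun j => ∃ r < k, (idxIn (P \ A) v * k + r) % (Q \ B).card = j)).trans
        (count1 hq hkq)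
  · -- degrees on Q side
    intro v hv _
    by_cases hvB : v ∈ B
    · have hfA : P.filter (fun w => (SimpleGraph.fromRel (biRel A B (P \ A) (Q \ B) k)).Adj v w) = A := by
        ext w
        simp only [mem_filter]
        constructor
        · rintro ⟨hwP, hadj⟩
          rw [SimpleGraph.fromRel_adj] at hadj
          rcases hadj.2 with (⟨h1, -⟩ | ⟨h1, -, -⟩) | (⟨h1, -⟩ | ⟨-, h2, -⟩)
          · exact absurd (hAP h1) (fun hx => hPQ hx hv)
          · exact absurd (mem_sdiff.mp h1).1 (fun hx => hPQ hx hv)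
          · exact h1
          · exact absurd hvB (mem_sdiff.mp h2).2
        · intro hwA
          refine ⟨hAP hwA, ?_⟩
          rw [SimpleGraph.fromRel_adj]
          exact ⟨fun h => hPQ (hAP hwA) (h ▸ hBQ hvB), Or.inr (Or.inl ⟨hwA, hvB⟩)⟩
      rw [hfA, hAcard]
    · have hvQ' : v ∈ Q \ B := mem_sdiff.mpr ⟨hv, hvB⟩
      have hjlt : idxIn (Q \ B) v < (Q \ B).card := idxIn_lt hvQ'
      have hf : P.filter (fun w => (SimpleGraph.fromRel (biRel A B (P \ A) (Q \ B) k)).Adj v w)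
          = (P \ A).filter (fun w =>
              (fun i => ∃ r < k, (i * k + r) % (Q \ B).card = idxIn (Q \ B) v)
                (idxIn (P \ A) w)) := by
        ext w
        simp only [mem_filter]
        constructor
        · rintro ⟨hwP, hadj⟩
          rw [SimpleGraph.fromRel_adj] at hadj
          rcases hadj.2 with (⟨h1, -⟩ | ⟨h1, -, -⟩) | (⟨-, h2⟩ | ⟨h1, h2, h3⟩)
          · exact absurd (hAP h1) (fun hx => hPQ hx hv)
          · exact absurd (mem_sdiff.mp h1).1 (fun hx => hPQ hx hv)
          · exact absurd h2 hvB
          · exact ⟨h1, h3⟩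
        · rintro ⟨hwP', hcond⟩
          refine ⟨(mem_sdiff.mp hwP').1, ?_⟩
          rw [SimpleGraph.fromRel_adj]
          exact ⟨fun h => hPQ (h ▸ (mem_sdiff.mp hwP').1) hv,
            Or.inr (Or.inr ⟨hwP', hvQ', hcond⟩)⟩
      rw [hf]
      exact (card_filter_idx (P \ A)
        (fun i => ∃ r < k, (i * k + r) % (Q \ B).card = idxIn (Q \ B) v)).trans
        (count2 hk hkq hpq hjlt)
  · -- not connected
    have hBne : B.Nonempty := card_pos.mp (by omega)
    have hQ'ne : (Q \ B).Nonempty := card_pos.mp (by omega)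
    obtain ⟨u, hu⟩ := hBne
    obtain ⟨v0, hv0⟩ := hQ'ne
    have hclosed : ∀ x y, (SimpleGraph.fromRel (biRel A B (P \ A) (Q \ B) k)).Adj x y →
        x ∈ A ∪ B → y ∈ A ∪ B := by
      intro x y hadj hx
      rw [SimpleGraph.fromRel_adj] at hadj
      rcases mem_union.mp hx with hxA | hxB
      · rcases hadj.2 with (⟨-, h2⟩ | ⟨h1, -, -⟩) | (⟨h1, h2⟩ | ⟨-, h2, -⟩)
        · exact mem_union_right _ h2
        · exact absurd hxA (mem_sdiff.mp h1).2
        · exact absurd h2 (fun hx' => hPQ (hAP hxA) (hBQ hx'))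
        · exact absurd (mem_sdiff.mp h2).1 (fun hx' => hPQ (hAP hxA) hx')
      · rcases hadj.2 with (⟨h1, -⟩ | ⟨h1, -, -⟩) | (⟨h1, -⟩ | ⟨-, h2, -⟩)
        · exact absurd (hAP h1) (fun hx' => hPQ hx' (hBQ hxB))
        · exact absurd (mem_sdiff.mp h1).1 (fun hx' => hPQ hx' (hBQ hxB))
        · exact mem_union_left _ h1
        · exact absurd hxB (mem_sdiff.mp h2).2
    have hreach : ∀ x y, (SimpleGraph.fromRel (biRel A B (P \ A) (Q \ B) k)).Reachable x y →
        x ∈ A ∪ B → y ∈ A ∪ B := by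
      intro x y hr
      obtain ⟨w⟩ := hr
      induction w with
      | nil => exact fun h => h
      | cons h p ih => exact fun hx => ih (hclosed _ _ h hx)
    intro hc
    have hv0AB : v0 ∈ A ∪ B := hreach u v0 (hc.preconnected u v0) (mem_union_right _ hu)
    rcases mem_union.mp hv0AB with h | h
    · exact hPQ (hAP h) (mem_sdiff.mp hv0).1
    · exact (mem_sdiff.mp hv0).2 h

/-- If a connected finite simple bipartite graph is `(k, ℓ)`-biregular on a
bipartition `(P, Q)` with `k, ℓ ≥ 2`, `k ≤ |Q|/2` and `ℓ ≤ |P|/2`, then there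
is a disconnected `(k, ℓ)`-biregular graph on the same bipartition; hence the
two graphs are non-isomorphic but have the same degree data. -/
theorem stmt_16 {V : Type*} [Fintype V] [DecidableEq V]
    (G : SimpleGraph V) [DecidableRel G.Adj] (P Q : Finset V) (k ℓ : ℕ)
    (hdisj : Disjoint P Q) (hunion : P ∪ Q = Finset.univ)
    (hPind : ∀ v ∈ P, ∀ w ∈ P, ¬ G.Adj v w)
    (hQind : ∀ v ∈ Q, ∀ w ∈ Q, ¬ G.Adj v w)
    (hP : ∀ v ∈ P, (Q.filter (fun w => G.Adj v w)).card = k)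
    (hQ : ∀ v ∈ Q, (P.filter (fun w => G.Adj v w)).card = ℓ)
    (hk : 2 ≤ k) (hl : 2 ≤ ℓ) (hkQ : 2 * k ≤ Q.card) (hlP : 2 * ℓ ≤ P.card)
    (hconn : G.Connected) :
    ∃ G' : SimpleGraph V,
      (∀ v ∈ P, ∀ w ∈ P, ¬ G'.Adj v w) ∧
      (∀ v ∈ Q, ∀ w ∈ Q, ¬ G'.Adj v w) ∧
      (∀ v ∈ P, Nat.card {w : V | w ∈ Q ∧ G'.Adj v w} = k) ∧
      (∀ v ∈ Q, Nat.card {w : V | w ∈ P ∧ G'.Adj v w} = ℓ) ∧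
      ¬ G'.Connected ∧ ¬ Nonempty (G ≃g G') := by
  classical
  have hsum : P.card * k = Q.card * ℓ := by
    have h1 : ∑ v ∈ P, (Q.filter (fun w => G.Adj v w)).card
        = ∑ w ∈ Q, (P.filter (fun v => G.Adj w v)).card := by
      simp_rw [Finset.card_filter]
      rw [Finset.sum_comm]
      refine Finset.sum_congr rfl fun w _ => Finset.sum_congr rfl fun v _ => ?_
      simp [SimpleGraph.adj_comm]
    have hL : ∑ v ∈ P, (Q.filter (fun w => G.Adj v w)).card = P.card * k :=
      Finset.sum_const_nat hP
    have hR : ∑ w ∈ Q, (P.filter (fun v => G.Adj w v)).card = Q.card * ℓ :=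
      Finset.sum_const_nat hQ
    omega
  obtain ⟨A, hAP, hAcard⟩ := Finset.exists_subset_card_eq (show ℓ ≤ P.card by omega)
  obtain ⟨B, hBQ, hBcard⟩ := Finset.exists_subset_card_eq (show k ≤ Q.card by omega)
  have hPA : (P \ A).card = P.card - ℓ := by rw [card_sdiff_of_subset hAP, hAcard]
  have hQB : (Q \ B).card = Q.card - k := by rw [card_sdiff_of_subset hBQ, hBcard]
  have hkq' : k ≤ (Q \ B).card := by omega
  have hpq : (P \ A).card * k = (Q \ B).card * ℓ := by
    rw [card_sdiff_of_subset hAP, card_sdiff_of_subset hBQ, hAcard, hBcard, Nat.sub_mul, Nat.sub_mul, hsum,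
      mul_comm ℓ k]
  obtain ⟨G', h1, h2, h3, h4, h5⟩ :=
    aux_main P Q A B k ℓ hdisj hAP hBQ hAcard hBcard (by omega) hkq' hpq
  refine ⟨G', h1, h2, ?_, ?_, h5, ?_⟩
  · intro v hv
    have hs : {w : V | w ∈ Q ∧ G'.Adj v w} = ↑(Q.filter (fun w => G'.Adj v w)) := by
      ext w; simp
    rw [hs, Nat.card_coe_set_eq, Set.ncard_coe_finset]
    exact h3 v hv
  · intro v hv
    have hs : {w : V | w ∈ P ∧ G'.Adj v w} = ↑(P.filter (fun w => G'.Adj v w)) := by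
      ext w; simp
    rw [hs, Nat.card_coe_set_eq, Set.ncard_coe_finset]
    exact h4 v hv
  · rintro ⟨e⟩
    exact h5 (hconn.map e.toHom e.toEquiv.surjective)
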